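/- For every k ≥ 2 and every surjective colouring Δ : ℕ^(2) ↠ [k], one has 2 ∈ F_Δ: there exists an infinite subset X ⊆ ℕ that is exactly 2-coloured. -/

import Mathlib

/-- The colour of the unordered edge `{x, y}` (only values on distinct pairs matter). -/
def edgeCol (Δ : ℕ → ℕ → ℕ) (x y : ℕ) : ℕ := Δ (min x y) (max x y)

/-- `colourSet Δ X` is the set of colours attained by `Δ` on edges with both endpoints in `X`. -/
def colourSet (Δ : ℕ → ℕ → ℕ) (X : Set ℕ) : Set ℕ :=
  {c | ∃ x ∈ X, ∃ y ∈ X, x ≠ y ∧ edgeCol Δ x y = c}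

/-- `Δ` is a surjective colouring `ℕ^(2) ↠ [k]` of the edges of the complete
graph on `ℕ` with colour set `[k] = {1, …, k}`. -/
def IsColouring (Δ : ℕ → ℕ → ℕ) (k : ℕ) : Prop :=
  (∀ x y : ℕ, x ≠ y → edgeCol Δ x y ∈ Finset.Icc 1 k) ∧
  (∀ c ∈ Finset.Icc 1 k, ∃ x y : ℕ, x ≠ y ∧ edgeCol Δ x y = c)

/-- `F_Δ`: the set of `m ∈ [k]` for which some infinite `X ⊆ ℕ` is exactly `m`-coloured. -/
def FSet (Δ : ℕ → ℕ → ℕ) (k : ℕ) : Set ℕ :=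
  {m | m ∈ Finset.Icc 1 k ∧ ∃ X : Set ℕ, X.Infinite ∧ (colourSet Δ X).ncard = m}

/- ### Auxiliary lemmas -/

theorem edgeCol_comm (Δ : ℕ → ℕ → ℕ) (x y : ℕ) : edgeCol Δ x y = edgeCol Δ y x := by
  unfold edgeCol; rw [min_comm, max_comm]

theorem mem_colourSet {Δ : ℕ → ℕ → ℕ} {X : Set ℕ} {x y : ℕ} (hx : x ∈ X) (hy : y ∈ X)
    (hxy : x ≠ y) : edgeCol Δ x y ∈ colourSet Δ X := ⟨x, hx, y, hy, hxy, rfl⟩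

/-- Pigeonhole for infinite sets. -/
theorem pigeon {k : ℕ} {S : Set ℕ} (hS : S.Infinite) (f : ℕ → ℕ)
    (hf : ∀ x ∈ S, f x ∈ Finset.Icc 1 k) :
    ∃ c ∈ Finset.Icc 1 k, {x ∈ S | f x = c}.Infinite := by
  by_contra h
  push_neg at h
  have hsub : S ⊆ ⋃ c ∈ (Finset.Icc 1 k : Finset ℕ), {x ∈ S | f x = c} := fun x hx =>
    Set.mem_biUnion (hf x hx) ⟨hx, rfl⟩
  exact hS ((Set.Finite.biUnion (Finset.Icc 1 k).finite_toSet
    (fun c hc => (h c hc))).subset hsub)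

theorem two_elts {S : Set ℕ} (hS : S.Infinite) : ∃ x ∈ S, ∃ y ∈ S, x ≠ y := by
  obtain ⟨x, hx⟩ := hS.nonempty
  obtain ⟨y, hy⟩ := (hS.diff (Set.finite_singleton x)).nonempty
  exact ⟨y, hy.1, x, hx, fun h => hy.2 (by simp [h])⟩

/-- Invariant for the Ramsey-type sequence: `p = (a, c, A)` with `A` infinite,
all elements of `A` above `a`, and all edges from `a` to `A` of colour `c ∈ [k]`. -/
def RamseyInv (Δ : ℕ → ℕ → ℕ) (k : ℕ) (p : ℕ × ℕ × Set ℕ) : Prop :=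
  p.2.2.Infinite ∧ (∀ x ∈ p.2.2, p.1 < x) ∧ (∀ x ∈ p.2.2, edgeCol Δ p.1 x = p.2.1) ∧
    p.2.1 ∈ Finset.Icc 1 k

theorem refine_exists (Δ : ℕ → ℕ → ℕ) (k : ℕ) (hΔ : IsColouring Δ k) (a : ℕ) {S : Set ℕ}
    (hS : S.Infinite) (ha : ∀ x ∈ S, a < x) :
    ∃ c A, RamseyInv Δ k (a, c, A) ∧ A ⊆ S := by
  have hf : ∀ x ∈ S, edgeCol Δ a x ∈ Finset.Icc 1 k := fun x hx =>
    hΔ.1 a x (ha x hx).ne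
  obtain ⟨c, hc, hinf⟩ := pigeon hS _ hf
  exact ⟨c, {x ∈ S | edgeCol Δ a x = c},
    ⟨hinf, fun x hx => ha x hx.1, fun x hx => hx.2, hc⟩, fun x hx => hx.1⟩

theorem init_exists (Δ : ℕ → ℕ → ℕ) (k : ℕ) (hΔ : IsColouring Δ k) :
    ∃ p : ℕ × ℕ × Set ℕ, RamseyInv Δ k p := by
  obtain ⟨c, A, hInv, _⟩ := refine_exists Δ k hΔ 0 (Set.Ioi_infinite 0) (fun x hx => hx)
  exact ⟨(0, c, A), hInv⟩

theorem step_exists (Δ : ℕ → ℕ → ℕ) (k : ℕ) (hΔ : IsColouring Δ k) (p : ℕ × ℕ × Set ℕ)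
    (hp : RamseyInv Δ k p) :
    ∃ q : ℕ × ℕ × Set ℕ, RamseyInv Δ k q ∧ q.1 ∈ p.2.2 ∧ q.2.2 ⊆ p.2.2 := by
  obtain ⟨a', ha'⟩ := hp.1.nonempty
  obtain ⟨c, A, hInv, hsub⟩ := refine_exists Δ k hΔ a' (hp.1.diff (Set.finite_Iic a'))
    (fun x hx => lt_of_not_ge hx.2)
  exact ⟨(a', c, A), hInv, ha', fun x hx => (hsub hx).1⟩

/-- The Ramsey sequence of states. -/
noncomputable def seq (Δ : ℕ → ℕ → ℕ) (k : ℕ) (hΔ : IsColouring Δ k) :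
    ℕ → {p : ℕ × ℕ × Set ℕ // RamseyInv Δ k p}
  | 0 => ⟨(init_exists Δ k hΔ).choose, (init_exists Δ k hΔ).choose_spec⟩
  | n + 1 => ⟨(step_exists Δ k hΔ (seq Δ k hΔ n).1 (seq Δ k hΔ n).2).choose,
      (step_exists Δ k hΔ (seq Δ k hΔ n).1 (seq Δ k hΔ n).2).choose_spec.1⟩

noncomputable def aSeq (Δ : ℕ → ℕ → ℕ) (k : ℕ) (hΔ : IsColouring Δ k) (n : ℕ) : ℕ :=
  (seq Δ k hΔ n).1.1

noncomputable def cSeq (Δ : ℕ → ℕ → ℕ) (k : ℕ) (hΔ : IsColouring Δ k) (n : ℕ) : ℕ :=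
  (seq Δ k hΔ n).1.2.1

noncomputable def ASeq (Δ : ℕ → ℕ → ℕ) (k : ℕ) (hΔ : IsColouring Δ k) (n : ℕ) : Set ℕ :=
  (seq Δ k hΔ n).1.2.2

variable {Δ : ℕ → ℕ → ℕ} {k : ℕ}

theorem seq_succ_mem (hΔ : IsColouring Δ k) (n : ℕ) :
    aSeq Δ k hΔ (n + 1) ∈ ASeq Δ k hΔ n :=
  (step_exists Δ k hΔ (seq Δ k hΔ n).1 (seq Δ k hΔ n).2).choose_spec.2.1

theorem seq_succ_subset (hΔ : IsColouring Δ k) (n : ℕ) :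
    ASeq Δ k hΔ (n + 1) ⊆ ASeq Δ k hΔ n :=
  (step_exists Δ k hΔ (seq Δ k hΔ n).1 (seq Δ k hΔ n).2).choose_spec.2.2

theorem seq_subset_of_le (hΔ : IsColouring Δ k) {i j : ℕ} (h : i ≤ j) :
    ASeq Δ k hΔ j ⊆ ASeq Δ k hΔ i := by
  induction j, h using Nat.le_induction with
  | base => exact Set.Subset.rfl
  | succ n _ ih => exact (seq_succ_subset hΔ n).trans ih

theorem seq_mem_of_lt (hΔ : IsColouring Δ k) {i j : ℕ} (h : i < j) :
    aSeq Δ k hΔ j ∈ ASeq Δ k hΔ i := by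
  obtain ⟨m, rfl⟩ := Nat.exists_eq_add_of_lt h
  exact seq_subset_of_le hΔ (Nat.le_add_right i m) (seq_succ_mem hΔ (i + m))

theorem aSeq_strictMono (hΔ : IsColouring Δ k) : StrictMono (aSeq Δ k hΔ) :=
  fun i j h => (seq Δ k hΔ i).2.2.1 _ (seq_mem_of_lt hΔ h)

theorem edgeCol_seq (hΔ : IsColouring Δ k) {i j : ℕ} (h : i < j) :
    edgeCol Δ (aSeq Δ k hΔ i) (aSeq Δ k hΔ j) = cSeq Δ k hΔ i :=
  (seq Δ k hΔ i).2.2.2.1 _ (seq_mem_of_lt hΔ h)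

theorem cSeq_mem (hΔ : IsColouring Δ k) (i : ℕ) : cSeq Δ k hΔ i ∈ Finset.Icc 1 k :=
  (seq Δ k hΔ i).2.2.2.2

theorem colourSet_insert_subset {z : ℕ} {S C : Set ℕ}
    (hz : ∀ x ∈ S, x ≠ z → edgeCol Δ z x ∈ C)
    (hS : colourSet Δ S ⊆ C) :
    colourSet Δ (insert z S) ⊆ C := by
  rintro c ⟨x, hx, y, hy, hxy, rfl⟩
  rcases Set.mem_insert_iff.mp hx with hxz | hxS
  · rcases Set.mem_insert_iff.mp hy with hyz | hyS
    · exact absurd (hxz.trans hyz.symm) hxy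
    · subst hxz; exact hz y hyS hxy.symm
  · rcases Set.mem_insert_iff.mp hy with hyz | hyS
    · subst hyz; rw [edgeCol_comm]; exact hz x hxS hxy
    · exact hS ⟨x, hxS, y, hyS, hxy, rfl⟩

theorem colourSet_subset_singleton {S : Set ℕ} {c : ℕ}
    (h : ∀ x ∈ S, ∀ y ∈ S, x ≠ y → edgeCol Δ x y = c) :
    colourSet Δ S ⊆ {c} := by
  rintro c' ⟨x, hx, y, hy, hxy, rfl⟩
  exact h x hx y hy hxy

theorem two_of (hk : 2 ≤ k) {X : Set ℕ} {c d : ℕ} (hX : X.Infinite) (hcd : c ≠ d)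
    (hset : colourSet Δ X = {c, d}) : 2 ∈ FSet Δ k := by
  refine ⟨Finset.mem_Icc.mpr ⟨one_le_two, hk⟩, X, hX, ?_⟩
  rw [hset, Set.ncard_pair hcd]

/-- For every `k ≥ 2` and every surjective colouring `Δ : ℕ^(2) ↠ [k]`, we have `2 ∈ F_Δ`:
some infinite `X ⊆ ℕ` is exactly 2-coloured. -/
theorem two_mem_FSet (k : ℕ) (hk : 2 ≤ k) (Δ : ℕ → ℕ → ℕ) (hΔ : IsColouring Δ k) :
    2 ∈ FSet Δ k := by
  set a := aSeq Δ k hΔ with ha_def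
  set c := cSeq Δ k hΔ with hc_def
  have hamono : StrictMono a := aSeq_strictMono hΔ
  have hedge : ∀ {i j : ℕ}, i < j → edgeCol Δ (a i) (a j) = c i := fun h => edgeCol_seq hΔ h
  -- pigeonhole on the colours `c i`
  obtain ⟨c₀, hc₀, hI⟩ := pigeon (k := k) Set.infinite_univ c
    (fun i _ => cSeq_mem hΔ i)
  set I : Set ℕ := {i ∈ Set.univ | c i = c₀} with hI_def
  by_cases hall : ∀ j, c j = c₀
  · -- the whole sequence is monochromatic of colour `c₀`
    have hrange : ∀ x ∈ Set.range a, ∀ y ∈ Set.range a, x ≠ y → edgeCol Δ x y = c₀ := by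
      rintro x ⟨i, rfl⟩ y ⟨j, rfl⟩ hxy
      rcases lt_trichotomy i j with h | rfl | h
      · rw [hedge h]; exact hall i
      · exact absurd rfl hxy
      · rw [edgeCol_comm, hedge h]; exact hall j
    -- find a second colour d ≠ c₀
    obtain ⟨d, hdIcc, hdc⟩ : ∃ d, d ∈ Finset.Icc 1 k ∧ d ≠ c₀ := by
      simp only [Finset.mem_Icc] at hc₀ ⊢
      rcases eq_or_ne c₀ 1 with rfl | h
      · exact ⟨2, ⟨by omega, hk⟩, by omega⟩
      · exact ⟨1, ⟨le_refl 1, by omega⟩, fun hh => h hh.symm⟩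
    obtain ⟨u, v, huv, hduv⟩ := hΔ.2 d hdIcc
    -- range of a above max u v
    have hM₀ : (Set.range a \ Set.Iic (max u v)).Infinite :=
      ((Set.infinite_range_of_injective hamono.injective).diff (Set.finite_Iic _))
    set M₀ : Set ℕ := Set.range a \ Set.Iic (max u v) with hM₀_def
    have hM₀u : ∀ x ∈ M₀, u < x := fun x hx =>
      lt_of_le_of_lt (le_max_left u v) (lt_of_not_ge hx.2)
    have hM₀v : ∀ x ∈ M₀, v < x := fun x hx =>
      lt_of_le_of_lt (le_max_right u v) (lt_of_not_ge hx.2)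
    obtain ⟨e, heIcc, hM₁⟩ := pigeon hM₀ (edgeCol Δ u)
      (fun x hx => hΔ.1 u x (hM₀u x hx).ne)
    set M₁ : Set ℕ := {x ∈ M₀ | edgeCol Δ u x = e} with hM₁_def
    have hM₁sub : M₁ ⊆ M₀ := fun x hx => hx.1
    by_cases he : e = c₀
    · -- refine once more with v
      obtain ⟨f, hfIcc, hM₂⟩ := pigeon hM₁ (edgeCol Δ v)
        (fun x hx => hΔ.1 v x (hM₀v x (hM₁sub hx)).ne)
      set M₂ : Set ℕ := {x ∈ M₁ | edgeCol Δ v x = f} with hM₂_def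
      have hM₂sub : M₂ ⊆ M₁ := fun x hx => hx.1
      have hM₂range : M₂ ⊆ Set.range a := fun x hx => (hM₁sub (hM₂sub hx)).1
      have hM₂c₀ : colourSet Δ M₂ ⊆ {c₀} := colourSet_subset_singleton
        (fun x hx y hy hxy => hrange x (hM₂range hx) y (hM₂range hy) hxy)
      obtain ⟨x₀, hx₀, y₀, hy₀, hxy₀⟩ := two_elts hM₂
      by_cases hf : f = c₀
      · -- X = {u, v} ∪ M₂, colours {c₀, d}
        refine two_of hk (X := insert u (insert v M₂)) (c := c₀) (d := d)
          ((hM₂.mono (Set.subset_insert _ _)).mono (Set.subset_insert _ _)) (Ne.symm hdc) ?_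
        apply Set.Subset.antisymm
        · refine colourSet_insert_subset ?_ (colourSet_insert_subset ?_
            (hM₂c₀.trans (by intro t ht; exact Or.inl ht)))
          · rintro x hx hxu
            rcases Set.mem_insert_iff.mp hx with rfl | hx
            · right; rw [Set.mem_singleton_iff, edgeCol_comm] at *; exact hduv
            · left; rw [(hM₂sub hx).2, he]
          · intro x hx _; left; rw [hx.2, hf]
        · rintro t (rfl | rfl)
          · have := mem_colourSet (Δ := Δ) (X := insert u (insert v M₂))
              (Set.mem_insert_iff.mpr (Or.inr (Set.mem_insert_iff.mpr (Or.inr hx₀))))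
              (Set.mem_insert_iff.mpr (Or.inr (Set.mem_insert_iff.mpr (Or.inr hy₀)))) hxy₀
            rwa [hrange x₀ (hM₂range hx₀) y₀ (hM₂range hy₀) hxy₀] at this
          · have := mem_colourSet (Δ := Δ) (X := insert u (insert v M₂))
              (Set.mem_insert _ _)
              (Set.mem_insert_iff.mpr (Or.inr (Set.mem_insert _ _))) huv
            rwa [hduv] at this
      · -- X = {v} ∪ M₂, colours {c₀, f}
        refine two_of hk (X := insert v M₂) (c := c₀) (d := f)
          (hM₂.mono (Set.subset_insert _ _)) (fun h => hf h.symm) ?_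
        apply Set.Subset.antisymm
        · refine colourSet_insert_subset ?_
            (hM₂c₀.trans (by intro t ht; exact Or.inl ht))
          intro x hx _; right; rw [hx.2]; rfl
        · rintro t (rfl | rfl)
          · have := mem_colourSet (Δ := Δ) (X := insert v M₂)
              (Set.mem_insert_iff.mpr (Or.inr hx₀))
              (Set.mem_insert_iff.mpr (Or.inr hy₀)) hxy₀
            rwa [hrange x₀ (hM₂range hx₀) y₀ (hM₂range hy₀) hxy₀] at this
          · have := mem_colourSet (Δ := Δ) (X := insert v M₂)
              (Set.mem_insert _ _)
              (Set.mem_insert_iff.mpr (Or.inr hx₀)) (hM₀v x₀ (hM₁sub (hM₂sub hx₀))).ne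
            rwa [hx₀.2] at this
    · -- X = {u} ∪ M₁, colours {c₀, e}
      have hM₁range : M₁ ⊆ Set.range a := fun x hx => hx.1.1
      have hM₁c₀ : colourSet Δ M₁ ⊆ {c₀} := colourSet_subset_singleton
        (fun x hx y hy hxy => hrange x (hM₁range hx) y (hM₁range hy) hxy)
      obtain ⟨x₀, hx₀, y₀, hy₀, hxy₀⟩ := two_elts hM₁
      refine two_of hk (X := insert u M₁) (c := c₀) (d := e)
        (hM₁.mono (Set.subset_insert _ _)) (fun h => he h.symm) ?_
      apply Set.Subset.antisymm
      · refine colourSet_insert_subset ?_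
          (hM₁c₀.trans (by intro t ht; exact Or.inl ht))
        intro x hx _; right; rw [hx.2]; rfl
      · rintro t (rfl | rfl)
        · have := mem_colourSet (Δ := Δ) (X := insert u M₁)
            (Set.mem_insert_iff.mpr (Or.inr hx₀))
            (Set.mem_insert_iff.mpr (Or.inr hy₀)) hxy₀
          rwa [hrange x₀ (hM₁range hx₀) y₀ (hM₁range hy₀) hxy₀] at this
        · have := mem_colourSet (Δ := Δ) (X := insert u M₁)
            (Set.mem_insert _ _)
            (Set.mem_insert_iff.mpr (Or.inr hx₀)) (hM₀u x₀ hx₀.1).ne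
          rwa [hx₀.2] at this
  · -- some c j ≠ c₀ : take X = {a j} ∪ a '' (I ∩ (j, ∞))
    push_neg at hall
    obtain ⟨j, hj⟩ := hall
    set J : Set ℕ := I \ Set.Iic j with hJ_def
    have hJinf : J.Infinite := hI.diff (Set.finite_Iic j)
    have hJprop : ∀ i ∈ J, c i = c₀ ∧ j < i := fun i hi =>
      ⟨hi.1.2, lt_of_not_ge hi.2⟩
    have hXinf : (insert (a j) (a '' J)).Infinite :=
      ((hJinf.image (Set.injOn_of_injective hamono.injective)).mono (Set.subset_insert _ _))
    obtain ⟨i₀, hi₀⟩ := hJinf.nonempty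
    obtain ⟨i₁, hi₁⟩ := (hJinf.diff (Set.finite_Iic i₀)).nonempty
    have hi₁J : i₁ ∈ J := hi₁.1
    have hi₀i₁ : i₀ < i₁ := lt_of_not_ge hi₁.2
    refine two_of hk (X := insert (a j) (a '' J)) (c := c₀) (d := c j)
      hXinf (fun h => hj h.symm) ?_
    apply Set.Subset.antisymm
    · refine colourSet_insert_subset ?_ ?_
      · rintro x ⟨i, hiJ, rfl⟩ _
        right; rw [hedge (hJprop i hiJ).2]; rfl
      · refine (colourSet_subset_singleton ?_).trans (by intro t ht; exact Or.inl ht)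
        rintro x ⟨i, hiJ, rfl⟩ y ⟨i', hi'J, rfl⟩ hxy
        have hii' : i ≠ i' := fun h => hxy (by rw [h])
        rcases lt_or_gt_of_ne hii' with h | h
        · rw [hedge h]; exact (hJprop i hiJ).1
        · rw [edgeCol_comm, hedge h]; exact (hJprop i' hi'J).1
    · rintro t (rfl | rfl)
      · have := mem_colourSet (Δ := Δ) (X := insert (a j) (a '' J))
          (Set.mem_insert_iff.mpr (Or.inr ⟨i₀, hi₀, rfl⟩))
          (Set.mem_insert_iff.mpr (Or.inr ⟨i₁, hi₁J, rfl⟩)) (hamono.injective.ne hi₀i₁.ne)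
        rwa [hedge hi₀i₁, (hJprop i₀ hi₀).1] at this
      · have := mem_colourSet (Δ := Δ) (X := insert (a j) (a '' J))
          (Set.mem_insert _ _)
          (Set.mem_insert_iff.mpr (Or.inr ⟨i₀, hi₀, rfl⟩))
          (hamono.injective.ne (hJprop i₀ hi₀).2.ne)
        rwa [hedge (hJprop i₀ hi₀).2] at this
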